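/- For real a, b and real β > 0, ∫₀^∞ (sin(a x) − sin(b x))/(x · cosh(β x)) dx = 2·arctan( (e^{aπ/(2β)} − e^{bπ/(2β)}) / (1 + e^{(a+b)π/(2β)}) ). -/

import Mathlib

open Real MeasureTheory

/-! Auxiliary lemmas -/

namespace Stmt11Aux

open Set Complex

noncomputable def φ (y : ℝ) : ℝ := Real.exp (2*y) / (1 + Real.exp (2*y))

lemma φ_hasDerivAt (y : ℝ) :
    HasDerivAt φ (2 * Real.exp (2*y) / (1 + Real.exp (2*y))^2) y := by
  have hu : HasDerivAt (fun y : ℝ => Real.exp (2*y)) (2 * Real.exp (2*y)) y := by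
    have := (Real.hasDerivAt_exp (2*y)).comp y ((hasDerivAt_id y).const_mul 2)
    simpa [Function.comp_def, mul_comm] using this
  have hd : HasDerivAt (fun y : ℝ => 1 + Real.exp (2*y)) (2 * Real.exp (2*y)) y := by
    exact hu.const_add 1
  have hne : (1 + Real.exp (2*y)) ≠ 0 := by positivity
  have := hu.div hd hne
  refine HasDerivAt.congr_deriv this ?_
  ring

lemma φ_mem (y : ℝ) : φ y ∈ Ioo (0:ℝ) 1 := by
  have h1 : (0:ℝ) < Real.exp (2*y) := Real.exp_pos _
  have h2 : (0:ℝ) < 1 + Real.exp (2*y) := by positivity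
  constructor
  · exact div_pos h1 h2
  · show Real.exp (2*y) / (1 + Real.exp (2*y)) < 1
    rw [div_lt_one h2]; linarith

lemma φ_range : φ '' Set.univ = Ioo (0:ℝ) 1 := by
  rw [Set.image_univ]
  ext x
  simp only [Set.mem_range, Set.mem_Ioo]
  constructor
  · rintro ⟨y, rfl⟩; exact φ_mem y
  · rintro ⟨h0, h1⟩
    refine ⟨Real.log (x / (1-x)) / 2, ?_⟩
    have hx1 : (0:ℝ) < 1 - x := by linarith
    have hpos : (0:ℝ) < x / (1-x) := div_pos h0 hx1
    unfold φ
    rw [show 2 * (Real.log (x / (1-x)) / 2) = Real.log (x / (1-x)) by ring,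
      Real.exp_log hpos]
    field_simp
    ring

lemma φ_injOn : Set.InjOn φ Set.univ := by
  intro y1 _ y2 _ h
  unfold φ at h
  have h1 : (0:ℝ) < 1 + Real.exp (2*y1) := by positivity
  have h2 : (0:ℝ) < 1 + Real.exp (2*y2) := by positivity
  have : Real.exp (2*y1) = Real.exp (2*y2) := by
    field_simp at h
    nlinarith [Real.exp_pos (2*y1), Real.exp_pos (2*y2)]
  have := Real.exp_injective this
  linarith

/-- The key substitution identity. -/
lemma subst_key (s : ℝ) :
    (∫ x in Ioo (0:ℝ) 1,
        (x:ℂ) ^ ((1 + s*Complex.I)/2 - 1) * ((1:ℂ) - x) ^ (-((1 + s*Complex.I)/2)))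
      = ∫ y : ℝ, Complex.exp (s * y * Complex.I) / Real.cosh y := by
  set p : ℂ := (1 + s*Complex.I)/2 with hp
  have h := integral_image_eq_integral_abs_deriv_smul MeasurableSet.univ
      (f' := fun y => 2 * Real.exp (2*y) / (1 + Real.exp (2*y))^2)
      (fun y _ => (φ_hasDerivAt y).hasDerivWithinAt) φ_injOn
      (fun x : ℝ => (x:ℂ) ^ (p - 1) * ((1:ℂ) - x) ^ (-p))
  rw [φ_range] at h
  rw [h, Measure.restrict_univ]
  apply integral_congr_ae (Filter.Eventually.of_forall ?_)
  intro y
  have hu : (0:ℝ) < Real.exp (2*y) := Real.exp_pos _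
  have hd : (0:ℝ) < 1 + Real.exp (2*y) := by positivity
  have hx0 : (0:ℝ) < φ y := (φ_mem y).1
  have hx1 : φ y < 1 := (φ_mem y).2
  have h1x : (1:ℝ) - φ y = 1 / (1 + Real.exp (2*y)) := by
    unfold φ; field_simp; ring
  have hlog1 : Real.log (φ y) = 2*y - Real.log (1 + Real.exp (2*y)) := by
    unfold φ; rw [Real.log_div (ne_of_gt hu) (ne_of_gt hd), Real.log_exp]
  have hlog2 : Real.log (1 - φ y) = -Real.log (1 + Real.exp (2*y)) := by
    rw [h1x, one_div, Real.log_inv]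
  have hc1 : ((φ y : ℝ):ℂ) ^ (p-1) = Complex.exp ((Real.log (φ y) : ℂ) * (p-1)) := by
    rw [Complex.cpow_def_of_ne_zero (by exact_mod_cast ne_of_gt hx0),
      Complex.ofReal_log hx0.le]
  have hc2 : ((1:ℂ) - (φ y:ℝ)) ^ (-p) = Complex.exp ((Real.log (1 - φ y) : ℂ) * (-p)) := by
    have he : ((1:ℂ) - (φ y:ℝ)) = ((1 - φ y : ℝ) : ℂ) := by push_cast; ring
    have hne : (1 - φ y : ℝ) ≠ 0 := by linarith
    rw [he, Complex.cpow_def_of_ne_zero (by exact_mod_cast hne),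
      Complex.ofReal_log (by linarith)]
  have hexp : (Real.log (φ y) : ℂ) * (p-1) + (Real.log (1-φ y) : ℂ) * (-p)
      = s*y*Complex.I - y + (Real.log (1 + Real.exp (2*y)) : ℂ) := by
    rw [hlog1, hlog2, hp]; push_cast; ring
  have hreal : (2 * Real.exp (2*y) / (1 + Real.exp (2*y))^2)
      * (Real.exp (-y) * (1 + Real.exp (2*y))) = 1 / Real.cosh y := by
    have h2y : Real.exp (2*y) = Real.exp y * Real.exp y := by
      rw [← Real.exp_add]; ring_nf
    have hce : Real.exp y ≠ 0 := (Real.exp_pos y).ne'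
    have hcosh : (0:ℝ) < Real.cosh y := Real.cosh_pos y
    rw [Real.cosh_eq, Real.exp_neg, h2y]
    field_simp
    ring
  simp only [Complex.real_smul, hc1, hc2, ← Complex.exp_add, hexp]
  rw [abs_of_pos (by positivity : (0:ℝ) < 2 * Real.exp (2*y) / (1 + Real.exp (2*y))^2)]
  rw [show s*y*Complex.I - y + (Real.log (1 + Real.exp (2*y)) : ℂ)
      = s*y*Complex.I + ((-y : ℝ) : ℂ) + ((Real.log (1 + Real.exp (2*y)) : ℝ) : ℂ) by
    push_cast; ring]
  rw [Complex.exp_add, Complex.exp_add, ← Complex.ofReal_exp, ← Complex.ofReal_exp,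
    Real.exp_log hd]
  rw [show ((2 * Real.exp (2*y) / (1 + Real.exp (2*y))^2 : ℝ) : ℂ)
        * (Complex.exp (s*y*Complex.I) * ((Real.exp (-y):ℝ):ℂ) * ((1 + Real.exp (2*y):ℝ):ℂ))
      = Complex.exp (s*y*Complex.I)
        * ((2 * Real.exp (2*y) / (1 + Real.exp (2*y))^2
            * (Real.exp (-y) * (1 + Real.exp (2*y))) : ℝ) : ℂ) by push_cast; ring, hreal]
  have hcoshne : ((Real.cosh y : ℝ) : ℂ) ≠ 0 := by
    exact_mod_cast (Real.cosh_pos y).ne'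
  push_cast
  field_simp

/-- one over cosh bound -/
lemma one_div_cosh_le (y : ℝ) : 1 / Real.cosh y ≤ 2 * Real.exp (-|y|) := by
  have h1 : Real.exp (|y|) / 2 ≤ Real.cosh y := by
    rcases abs_cases y with ⟨h, _⟩ | ⟨h, _⟩ <;> rw [h, Real.cosh_eq]
    · nlinarith [Real.exp_pos (-y)]
    · rw [Real.exp_neg]
      nlinarith [Real.exp_pos y, Real.exp_pos (-y), Real.exp_neg y]
  have h2 : (0:ℝ) < Real.exp (|y|) / 2 := by positivity
  have h3 : 1 / Real.cosh y ≤ 1 / (Real.exp (|y|) / 2) :=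
    one_div_le_one_div_of_le h2 h1
  calc 1 / Real.cosh y ≤ 1 / (Real.exp (|y|) / 2) := h3
    _ = 2 * Real.exp (-|y|) := by rw [Real.exp_neg]; field_simp

lemma integrable_two_exp_neg_abs : Integrable (fun y : ℝ => 2 * Real.exp (-|y|)) := by
  have h1 : IntegrableOn (fun y : ℝ => Real.exp (-|y|)) (Ioi 0) := by
    refine (exp_neg_integrableOn_Ioi 0 one_pos).congr_fun ?_ measurableSet_Ioi
    intro y hy
    simp only
    rw [abs_of_pos (Set.mem_Ioi.mp hy)]
    ring_nf
  have h2 : IntegrableOn (fun y : ℝ => Real.exp (-|y|)) (Iic 0) := by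
    refine (integrableOn_exp_Iic 0).congr_fun ?_ measurableSet_Iic
    intro y hy
    simp only
    rw [abs_of_nonpos (Set.mem_Iic.mp hy), neg_neg]
  have h3 : IntegrableOn (fun y : ℝ => Real.exp (-|y|)) (Iic 0 ∪ Ioi 0) := h2.union h1
  rw [Set.Iic_union_Ioi] at h3
  exact (integrableOn_univ.mp h3).const_mul 2

lemma integrable_cexp_div_cosh (s : ℝ) :
    Integrable (fun y : ℝ => Complex.exp (s * y * Complex.I) / Real.cosh y) := by
  have hcont : Continuous (fun y : ℝ => Complex.exp (s*y*Complex.I) / (Real.cosh y : ℂ)) := by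
    apply Continuous.div
    · exact Complex.continuous_exp.comp (by fun_prop)
    · fun_prop
    · intro y; exact_mod_cast (Real.cosh_pos y).ne'
  refine integrable_two_exp_neg_abs.mono' hcont.aestronglyMeasurable
    (Filter.Eventually.of_forall fun y => ?_)
  rw [norm_div, Complex.norm_exp,
    Complex.norm_real, Real.norm_eq_abs, abs_of_pos (Real.cosh_pos y)]
  have hre : ((s:ℂ) * y * Complex.I).re = 0 := by simp
  rw [hre, Real.exp_zero]
  exact one_div_cosh_le y

lemma cos_div_cosh_cont (s : ℝ) : Continuous (fun y : ℝ => Real.cos (s * y) / Real.cosh y) := by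
  apply Continuous.div (by fun_prop) (by fun_prop)
  intro y; exact (Real.cosh_pos y).ne'

lemma integrable_cos_div_cosh (s : ℝ) :
    Integrable (fun y : ℝ => Real.cos (s * y) / Real.cosh y) := by
  refine integrable_two_exp_neg_abs.mono' (cos_div_cosh_cont s).aestronglyMeasurable
    (Filter.Eventually.of_forall fun y => ?_)
  rw [Real.norm_eq_abs, abs_div, abs_of_pos (Real.cosh_pos y)]
  calc |Real.cos (s*y)| / Real.cosh y ≤ 1 / Real.cosh y := by
        gcongr
        exact Real.abs_cos_le_one _
    _ ≤ 2 * Real.exp (-|y|) := one_div_cosh_le y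

/-- The Fourier transform of sech. -/
lemma integral_cos_div_cosh (s : ℝ) :
    ∫ x in Ioi (0:ℝ), Real.cos (s * x) / Real.cosh x = π / (2 * Real.cosh (π * s / 2)) := by
  set p : ℂ := (1 + s*Complex.I)/2 with hp
  have hcoshpos : (0:ℝ) < Real.cosh (π * s / 2) := Real.cosh_pos _
  have hsin : Complex.sin (π * p) = (Real.cosh (π * s / 2) : ℂ) := by
    rw [hp]
    rw [show (π:ℂ) * ((1 + s*Complex.I)/2) = π/2 + (π*s/2 : ℂ)*Complex.I by push_cast; ring]
    rw [Complex.sin_add, Complex.sin_pi_div_two, Complex.cos_pi_div_two,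
      Complex.cos_mul_I, Complex.ofReal_cosh]
    push_cast
    ring
  have hrep : p.re = 1/2 := by
    rw [hp]
    simp [Complex.div_re]
  have hGamma : Complex.Gamma p * Complex.Gamma (1-p)
      = (π : ℂ) / (Real.cosh (π * s / 2) : ℂ) := by
    rw [Complex.Gamma_mul_Gamma_one_sub, hsin]
  have hbeta : Complex.Gamma p * Complex.Gamma (1-p) = Complex.betaIntegral p (1-p) := by
    have h1 : 0 < p.re := by rw [hrep]; norm_num
    have h2 : 0 < (1-p).re := by rw [Complex.sub_re, Complex.one_re, hrep]; norm_num
    have h3 := Complex.Gamma_mul_Gamma_eq_betaIntegral h1 h2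
    rwa [show p + (1-p) = 1 by ring, Complex.Gamma_one, one_mul] at h3
  have hbeta2 : Complex.betaIntegral p (1-p)
      = ∫ x in Ioo (0:ℝ) 1, (x:ℂ) ^ (p - 1) * ((1:ℂ) - x) ^ (-p) := by
    rw [Complex.betaIntegral, intervalIntegral.integral_of_le zero_le_one,
      integral_Ioc_eq_integral_Ioo]
    simp only [show (1:ℂ) - p - 1 = -p by ring]
  have hkey : (∫ y : ℝ, Complex.exp (s * y * Complex.I) / Real.cosh y)
      = (π : ℂ) / (Real.cosh (π * s / 2) : ℂ) := by
    rw [← subst_key s, ← hbeta2, ← hbeta, hGamma]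
  have hre : (∫ y : ℝ, Real.cos (s*y) / Real.cosh y) = π / Real.cosh (π * s / 2) := by
    have h1 := integral_re (μ := volume) (integrable_cexp_div_cosh s)
    have h2 : ∀ y : ℝ, (Complex.exp (s*y*Complex.I) / (Real.cosh y : ℂ)).re
        = Real.cos (s*y) / Real.cosh y := by
      intro y
      rw [Complex.div_ofReal_re]
      congr 1
      rw [show (s:ℂ)*y*Complex.I = ((s*y : ℝ):ℂ)*Complex.I by push_cast; ring]
      exact Complex.exp_ofReal_mul_I_re _
    calc (∫ y : ℝ, Real.cos (s*y) / Real.cosh y)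
        = ∫ y : ℝ, (Complex.exp (s*y*Complex.I) / (Real.cosh y : ℂ)).re := by
          congr 1; funext y; rw [h2]
      _ = ((∫ y : ℝ, Complex.exp (s*y*Complex.I) / (Real.cosh y : ℂ))).re := by
          simpa using h1
      _ = π / Real.cosh (π * s / 2) := by
          rw [hkey, Complex.div_ofReal_re, Complex.ofReal_re]
  have heven : (∫ y in Iic (0:ℝ), Real.cos (s*y) / Real.cosh y)
      = ∫ y in Ioi (0:ℝ), Real.cos (s*y) / Real.cosh y := by
    have h := integral_comp_neg_Ioi (0:ℝ) (fun y => Real.cos (s*y) / Real.cosh y)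
    rw [neg_zero] at h
    rw [← h]
    apply integral_congr_ae (Filter.Eventually.of_forall fun y => ?_)
    show Real.cos (s * -y) / Real.cosh (-y) = _
    rw [Real.cosh_neg, show s * -y = -(s*y) by ring, Real.cos_neg]
  have hsplit := intervalIntegral.integral_Iic_add_Ioi (b := (0:ℝ)) (μ := volume)
    ((integrable_cos_div_cosh s).integrableOn) ((integrable_cos_div_cosh s).integrableOn)
  rw [heven, hre] at hsplit
  have : (2:ℝ) * ∫ y in Ioi (0:ℝ), Real.cos (s*y) / Real.cosh y = π / Real.cosh (π * s / 2) := by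
    linarith
  field_simp at this ⊢
  linarith

/-- scaled version -/
lemma integral_cos_div_cosh' (a β : ℝ) (hβ : 0 < β) :
    ∫ x in Ioi (0:ℝ), Real.cos (a * x) / Real.cosh (β * x)
      = π / (2 * β * Real.cosh (a * π / (2 * β))) := by
  have h := integral_comp_mul_left_Ioi (fun u => Real.cos ((a/β)*u) / Real.cosh u) 0 hβ
  simp only [mul_zero] at h
  have h2 : (∫ x in Ioi (0:ℝ), Real.cos ((a/β)*(β*x)) / Real.cosh (β*x))
      = ∫ x in Ioi (0:ℝ), Real.cos (a*x) / Real.cosh (β*x) := by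
    apply integral_congr_ae (Filter.Eventually.of_forall fun x => ?_)
    rw [show (a/β)*(β*x) = a*x by field_simp]
  rw [h2] at h
  rw [h, integral_cos_div_cosh (a/β), smul_eq_mul]
  rw [show π * (a/β) / 2 = a * π / (2*β) by field_simp]
  have hc : (0:ℝ) < Real.cosh (a * π / (2 * β)) := Real.cosh_pos _
  field_simp

lemma integrable_sin_term (a : ℝ) {β : ℝ} (hβ : 0 < β) :
    IntegrableOn (fun x => Real.sin (a*x) / (x * Real.cosh (β*x))) (Ioi (0:ℝ)) := by
  have hcont : ContinuousOn (fun x => Real.sin (a*x) / (x * Real.cosh (β*x))) (Ioi (0:ℝ)) := by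
    apply ContinuousOn.div (by fun_prop) (by fun_prop)
    intro x hx
    have hx0 : (0:ℝ) < x := hx
    have := Real.cosh_pos (β*x)
    positivity
  refine Integrable.mono' (((exp_neg_integrableOn_Ioi 0 hβ).const_mul (2*|a|)))
    (hcont.aestronglyMeasurable measurableSet_Ioi) ?_
  rw [ae_restrict_iff' measurableSet_Ioi]
  refine Filter.Eventually.of_forall fun x hx => ?_
  have hx0 : (0:ℝ) < x := hx
  have hch : (0:ℝ) < Real.cosh (β*x) := Real.cosh_pos _
  rw [Real.norm_eq_abs, abs_div, abs_of_pos (by positivity : (0:ℝ) < x * Real.cosh (β*x))]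
  have h1 : |Real.sin (a*x)| ≤ |a| * x := by
    calc |Real.sin (a*x)| ≤ |a*x| := Real.abs_sin_le_abs
      _ = |a| * x := by rw [abs_mul, abs_of_pos hx0]
  calc |Real.sin (a*x)| / (x * Real.cosh (β*x)) ≤ (|a| * x) / (x * Real.cosh (β*x)) := by
        gcongr
    _ = |a| / Real.cosh (β*x) := by
        rw [mul_comm |a| x, mul_comm x (Real.cosh (β*x)), ← div_div, mul_div_assoc,
          mul_comm x, mul_div_assoc, div_self hx0.ne', mul_one]
    _ ≤ |a| * (2 * Real.exp (-(β*x))) := by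
        have := one_div_cosh_le (β*x)
        rw [abs_of_pos (by positivity)] at this
        calc |a| / Real.cosh (β*x) = |a| * (1 / Real.cosh (β*x)) := by ring
          _ ≤ |a| * (2 * Real.exp (-(β*x))) := by
              apply mul_le_mul_of_nonneg_left this (abs_nonneg a)
    _ = 2 * |a| * Real.exp (-β*x) := by rw [show -β*x = -(β*x) by ring]; ring

lemma S_hasDerivAt {β : ℝ} (hβ : 0 < β) (a : ℝ) :
    HasDerivAt (fun a => ∫ x in Ioi (0:ℝ), Real.sin (a*x) / (x * Real.cosh (β*x)))
      (π / (2 * β * Real.cosh (a * π / (2 * β)))) a := by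
  have hch : ∀ x : ℝ, (0:ℝ) < Real.cosh (β*x) := fun x => Real.cosh_pos _
  have hmain := hasDerivAt_integral_of_dominated_loc_of_deriv_le
    (F := fun a x => Real.sin (a*x) / (x * Real.cosh (β*x)))
    (F' := fun a x => Real.cos (a*x) / Real.cosh (β*x))
    (μ := volume.restrict (Ioi (0:ℝ)))
    (x₀ := a) (bound := fun x => 2 * Real.exp (-β*x)) (s := Metric.ball a 1) (Metric.ball_mem_nhds a one_pos)
    ?_ ?_ ?_ ?_ ?_ ?_
  · have hcos := integral_cos_div_cosh' a β hβ
    exact hcos ▸ hmain.2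
  · refine Filter.Eventually.of_forall fun a' => ?_
    have hcont : ContinuousOn (fun x => Real.sin (a'*x) / (x * Real.cosh (β*x))) (Ioi (0:ℝ)) := by
      apply ContinuousOn.div (by fun_prop) (by fun_prop)
      intro x hx
      have hx0 : (0:ℝ) < x := hx
      have := hch x
      positivity
    exact hcont.aestronglyMeasurable measurableSet_Ioi
  · exact integrable_sin_term a hβ
  · apply Continuous.aestronglyMeasurable
    apply Continuous.div (by fun_prop) (by fun_prop)
    exact fun x => (hch x).ne'
  · rw [ae_restrict_iff' measurableSet_Ioi]
    refine Filter.Eventually.of_forall fun x hx => ?_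
    intro a' _
    have hx0 : (0:ℝ) < x := hx
    rw [Real.norm_eq_abs, abs_div, abs_of_pos (hch x)]
    have h1 := one_div_cosh_le (β*x)
    rw [abs_of_pos (by positivity)] at h1
    calc |Real.cos (a'*x)| / Real.cosh (β*x) ≤ 1 / Real.cosh (β*x) := by
          gcongr
          exact Real.abs_cos_le_one _
      _ ≤ 2 * Real.exp (-(β*x)) := h1
      _ = 2 * Real.exp (-β*x) := by rw [show -(β*x) = -β*x by ring]
  · exact (exp_neg_integrableOn_Ioi 0 hβ).const_mul 2
  · rw [ae_restrict_iff' measurableSet_Ioi]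
    refine Filter.Eventually.of_forall fun x hx => ?_
    intro a' _
    have hx0 : (0:ℝ) < x := hx
    have h := ((Real.hasDerivAt_sin (a'*x)).comp a' (hasDerivAt_mul_const x)).div_const
      (x * Real.cosh (β*x))
    refine HasDerivAt.congr_deriv h ?_
    rw [mul_comm (Real.cos _) x, mul_div_mul_left _ _ hx0.ne']

lemma S_eq {β : ℝ} (hβ : 0 < β) (a : ℝ) :
    (∫ x in Ioi (0:ℝ), Real.sin (a*x) / (x * Real.cosh (β*x)))
      = 2 * Real.arctan (Real.exp (a * π / (2 * β))) - π/2 := by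
  set S : ℝ → ℝ := fun a => ∫ x in Ioi (0:ℝ), Real.sin (a*x) / (x * Real.cosh (β*x)) with hS
  have harct : ∀ a : ℝ, HasDerivAt (fun a => 2 * Real.arctan (Real.exp (a * π / (2 * β))))
      (π / (2 * β * Real.cosh (a * π / (2 * β)))) a := by
    intro a
    have h1 : HasDerivAt (fun a : ℝ => a * π / (2*β)) (π / (2*β)) a := by
      simpa [mul_div_assoc] using (hasDerivAt_mul_const (π / (2*β)) (x := a))
    have h2 := (Real.hasDerivAt_exp (a * π / (2*β))).comp a h1
    have h3 := ((Real.hasDerivAt_arctan (Real.exp (a * π / (2*β)))).comp a h2).const_mul 2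
    refine HasDerivAt.congr_deriv h3 ?_
    rw [Real.cosh_eq, Real.exp_neg]
    have he : (0:ℝ) < Real.exp (a * π / (2*β)) := Real.exp_pos _
    field_simp
    ring
  have hg : ∀ a : ℝ, HasDerivAt
      (fun a => S a - 2 * Real.arctan (Real.exp (a * π / (2 * β)))) 0 a := by
    intro a
    have := (S_hasDerivAt hβ a).sub (harct a)
    exact this.congr_deriv (sub_self _)
  have hconst := is_const_of_deriv_eq_zero (f := fun a => S a - 2 * Real.arctan (Real.exp (a * π / (2 * β))))
    (fun a => (hg a).differentiableAt) (fun a => (hg a).deriv) a 0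
  have hS0 : S 0 = 0 := by
    rw [hS]
    simp
  rw [hS0] at hconst
  simp only [zero_mul, Real.exp_zero, Real.arctan_one] at hconst
  have : S a - 2 * Real.arctan (Real.exp (a * π / (2 * β))) = 0 - 2 * (π/4) := by
    simpa using hconst
  linarith

end Stmt11Aux

theorem stmt_11 (a b β : ℝ) (hβ : 0 < β) :
    ∫ x in Set.Ioi (0:ℝ), (Real.sin (a * x) - Real.sin (b * x)) / (x * Real.cosh (β * x)) =
      2 * Real.arctan ((Real.exp (a * π / (2 * β)) - Real.exp (b * π / (2 * β))) /
        (1 + Real.exp ((a + b) * π / (2 * β)))) := by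
  open Stmt11Aux Set in
  have hsplit : (∫ x in Set.Ioi (0:ℝ),
      (Real.sin (a * x) - Real.sin (b * x)) / (x * Real.cosh (β * x)))
      = (∫ x in Set.Ioi (0:ℝ), Real.sin (a*x) / (x * Real.cosh (β*x)))
        - ∫ x in Set.Ioi (0:ℝ), Real.sin (b*x) / (x * Real.cosh (β*x)) := by
    rw [← integral_sub (integrable_sin_term a hβ) (integrable_sin_term b hβ)]
    apply integral_congr_ae (Filter.Eventually.of_forall fun x => ?_)
    exact sub_div _ _ _
  rw [hsplit, S_eq hβ a, S_eq hβ b]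
  set u := Real.exp (a * π / (2 * β)) with hu
  set v := Real.exp (b * π / (2 * β)) with hv
  have hup : (0:ℝ) < u := Real.exp_pos _
  have hvp : (0:ℝ) < v := Real.exp_pos _
  have huv : u * v = Real.exp ((a + b) * π / (2 * β)) := by
    rw [hu, hv, ← Real.exp_add]
    congr 1
    field_simp
  have h1 : u * (-v) < 1 := by nlinarith
  have h2 := Real.arctan_add h1
  rw [Real.arctan_neg, show u + -v = u - v by ring, show 1 - u*(-v) = 1 + u*v by ring] at h2
  rw [← huv]
  linarith
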